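/- Let ℓ be an odd prime and f an odd positive integer. If ℓ divides 3^f + 1, then ℓ ≡ 1 (mod 12) or ℓ ≡ 7 (mod 12). -/

import Mathlib

theorem stmt_2 (ℓ f : ℕ) (hp : ℓ.Prime) (hodd : Odd ℓ) (hf : Odd f) (hf1 : 1 ≤ f)
    (hdvd : ℓ ∣ 3 ^ f + 1) : ℓ % 12 = 1 ∨ ℓ % 12 = 7 := by
  haveI : Fact ℓ.Prime := ⟨hp⟩
  have hl2 : ℓ ≠ 2 := by
    rintro rfl
    simp [Nat.odd_iff] at hodd
  have hl3 : ℓ ≠ 3 := by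
    rintro rfl
    have h3 : (3 : ℕ) ∣ 3 ^ f := dvd_pow_self 3 (by omega)
    have : (3 : ℕ) ∣ 1 := (Nat.dvd_add_right h3).mp hdvd
    norm_num at this
  -- 3^f = -1 in ZMod ℓ
  have hz : (3 : ZMod ℓ) ^ f = -1 := by
    have : ((3 ^ f + 1 : ℕ) : ZMod ℓ) = 0 := (ZMod.natCast_eq_zero_iff _ _).mpr hdvd
    push_cast at this
    linear_combination this
  -- -3 is a square mod ℓ
  obtain ⟨t, ht⟩ : ∃ t : ZMod ℓ, t ^ 2 = -3 := by
    refine ⟨(-3) ^ ((f + 1) / 2), ?_⟩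
    have h1 : ((-3 : ZMod ℓ) ^ ((f + 1) / 2)) ^ 2 = (-3 : ZMod ℓ) ^ (f + 1) := by
      rw [← pow_mul]
      congr 1
      have := Nat.odd_iff.mp hf
      omega
    rw [h1, pow_succ, Odd.neg_pow hf, hz]
    ring
  have h2ne : (2 : ZMod ℓ) ≠ 0 := by
    intro h
    have h2 : ((2 : ℕ) : ZMod ℓ) = 0 := by exact_mod_cast h
    rw [ZMod.natCast_eq_zero_iff] at h2
    exact hl2 ((Nat.prime_dvd_prime_iff_eq hp Nat.prime_two).mp h2)
  set ω : ZMod ℓ := (t - 1) / 2 with hω_def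
  have hω : ω ^ 2 + ω + 1 = 0 := by
    rw [hω_def]
    field_simp
    linear_combination ht
  have hω3 : ω ^ 3 = 1 := by linear_combination (ω - 1) * hω
  have hωne1 : ω ≠ 1 := by
    intro h
    rw [h] at hω
    have h3 : (3 : ZMod ℓ) = 0 := by linear_combination hω
    have h3' : ((3 : ℕ) : ZMod ℓ) = 0 := by exact_mod_cast h3
    rw [ZMod.natCast_eq_zero_iff] at h3'
    exact hl3 ((Nat.prime_dvd_prime_iff_eq hp Nat.prime_three).mp h3')
  have hωne0 : ω ≠ 0 := by
    intro h
    rw [h] at hω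
    simp at hω
  have hord : orderOf ω = 3 := by
    have hdvd3 : orderOf ω ∣ 3 := orderOf_dvd_of_pow_eq_one hω3
    rcases (Nat.Prime.eq_one_or_self_of_dvd Nat.prime_three _ hdvd3) with h | h
    · exact absurd (orderOf_eq_one_iff.mp h) hωne1
    · exact h
  have hfermat : ω ^ (ℓ - 1) = 1 := ZMod.pow_card_sub_one_eq_one hωne0
  have h3dvd : 3 ∣ ℓ - 1 := hord ▸ orderOf_dvd_of_pow_eq_one hfermat
  have h2' : ℓ % 2 = 1 := Nat.odd_iff.mp hodd
  have hge : 2 ≤ ℓ := hp.two_le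
  omega
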